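/- Let S be a finite set and A_1, ..., A_m ⊆ S. For the p-random subset S_p of S (each element included independently with probability p), let E_i be the event {A_i ⊆ S_p}, μ = Σ_i P(E_i), and Δ̄ = ΣΣ{P(E_i ∩ E_j) : A_i ∩ A_j ≠ ∅} (including diagonal terms i = j). Then P(no E_i occurs) ≤ exp[-μ²/Δ̄]. -/

import Mathlib

open scoped Classical
open Finset

namespace Janson13
variable {S : Type*} [Fintype S] [DecidableEq S]

noncomputable def pw (p : ℝ) (B U : Finset S) : ℝ := p ^ U.card * (1 - p) ^ (B.card - U.card)

lemma mass (p : ℝ) (B : Finset S) : ∑ U ∈ B.powerset, pw p B U = 1 := by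
  have h := Finset.prod_add (fun _ : S => p) (fun _ : S => (1 - p)) B
  simp only [Finset.prod_const] at h
  have h2 : ∀ U ∈ B.powerset, ((p : ℝ) ^ U.card * (1-p) ^ (B \ U).card) = pw p B U := by
    intro U hU
    rw [Finset.mem_powerset] at hU
    rw [pw, card_sdiff_of_subset hU]
  rw [Finset.sum_congr rfl h2] at h
  simpa using h.symm

lemma pw_nonneg {p : ℝ} (hp0 : 0 ≤ p) (hp1 : p ≤ 1) (B U : Finset S) : 0 ≤ pw p B U := by
  have h : (0:ℝ) ≤ 1 - p := by linarith
  unfold pw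
  positivity

/-- modularity of the weight -/
lemma pw_mod (p : ℝ) (a b : Finset S) :
    pw p univ a * pw p univ b = pw p univ (a ∩ b) * pw p univ (a ∪ b) := by
  unfold pw
  have h1 := Finset.card_inter_add_card_union a b
  have h2 : a.card ≤ (univ : Finset S).card := card_le_card (subset_univ _)
  have h3 : b.card ≤ (univ : Finset S).card := card_le_card (subset_univ _)
  have h4 : (a ∩ b).card ≤ (univ : Finset S).card := card_le_card (subset_univ _)
  have h5 : (a ∪ b).card ≤ (univ : Finset S).card := card_le_card (subset_univ _)
  have e1 : a.card + b.card = (a ∩ b).card + (a ∪ b).card := h1.symm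
  have e2 : ((univ : Finset S).card - a.card) + ((univ : Finset S).card - b.card)
      = ((univ : Finset S).card - (a ∩ b).card) + ((univ : Finset S).card - (a ∪ b).card) := by
    omega
  calc p ^ a.card * (1 - p) ^ ((univ : Finset S).card - a.card) *
        (p ^ b.card * (1 - p) ^ ((univ : Finset S).card - b.card))
      = p ^ (a.card + b.card) *
        (1 - p) ^ (((univ : Finset S).card - a.card) + ((univ : Finset S).card - b.card)) := by
        rw [pow_add, pow_add]; ring
    _ = p ^ ((a ∩ b).card + (a ∪ b).card) *
        (1 - p) ^ (((univ : Finset S).card - (a ∩ b).card) + ((univ : Finset S).card - (a ∪ b).card)) := by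
        rw [e1, e2]
    _ = _ := by rw [pow_add, pow_add]; ring

/-- splitting the product measure along coordinates in `A` vs outside `A` -/
lemma factor (p : ℝ) (A : Finset S) (a b : Finset S → ℝ) :
    ∑ T : Finset S, pw p univ T * (a (T ∩ A) * b (T \ A)) =
    (∑ U ∈ A.powerset, pw p A U * a U) * (∑ V ∈ Aᶜ.powerset, pw p Aᶜ V * b V) := by
  rw [Finset.sum_mul_sum, ← Finset.sum_product']
  rw [show (∑ T : Finset S, pw p univ T * (a (T ∩ A) * b (T \ A)))
      = ∑ T ∈ (univ : Finset S).powerset, pw p univ T * (a (T ∩ A) * b (T \ A)) by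
    rw [Finset.powerset_univ]]
  refine Finset.sum_nbij' (fun T => (T ∩ A, T \ A)) (fun x => x.1 ∪ x.2) ?_ ?_ ?_ ?_ ?_
  · intro T _
    simp only [Finset.mem_product, Finset.mem_powerset]
    exact ⟨inter_subset_right, fun x hx => by simp [Finset.mem_sdiff.mp hx |>.2,
      Finset.mem_compl]⟩
  · intro x hx
    simp [Finset.mem_powerset]
  · intro T _
    ext y; simp only [Finset.mem_union, Finset.mem_inter, Finset.mem_sdiff]; tauto
  · intro x hx
    simp only [Finset.mem_product, Finset.mem_powerset] at hx
    obtain ⟨h1, h2⟩ := hx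
    have hd : ∀ y ∈ x.2, y ∉ A := fun y hy => by
      have := h2 hy; simpa [Finset.mem_compl] using this
    have e1 : (x.1 ∪ x.2) ∩ A = x.1 := by
      ext y; simp only [Finset.mem_inter, Finset.mem_union]
      constructor
      · rintro ⟨hy | hy, hyA⟩
        · simpa [mul_comm] using hy
        · exact absurd hyA (hd y hy)
      · intro hy; exact ⟨Or.inl hy, h1 hy⟩
    have e2 : (x.1 ∪ x.2) \ A = x.2 := by
      ext y; simp only [Finset.mem_sdiff, Finset.mem_union]
      constructor
      · rintro ⟨hy | hy, hyA⟩
        · exact absurd (h1 hy) hyA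
        · simpa [mul_comm] using hy
      · intro hy; exact ⟨Or.inr hy, hd y hy⟩
    rw [Prod.ext_iff]
    exact ⟨e1, e2⟩
  · intro T _
    have e1 : T ∩ A ⊆ A := inter_subset_right
    have e2 : T \ A ⊆ Aᶜ := fun y hy => by
      simp [Finset.mem_compl, (Finset.mem_sdiff.mp hy).2]
    have hdisj : Disjoint (T ∩ A) (T \ A) := by
      refine Finset.disjoint_left.mpr fun y hy => ?_
      simp only [Finset.mem_inter] at hy
      simp [hy.2]
    have hcard : T.card = (T ∩ A).card + (T \ A).card := by
      rw [← Finset.card_union_of_disjoint hdisj]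
      congr 1
      ext y; simp only [Finset.mem_union, Finset.mem_inter, Finset.mem_sdiff]; tauto
    have hcompl : (univ : Finset S).card = A.card + Aᶜ.card := by
      rw [← Finset.card_union_of_disjoint (disjoint_compl_right), Finset.union_compl]
    have hc1 : (T ∩ A).card ≤ A.card := card_le_card e1
    have hc2 : (T \ A).card ≤ Aᶜ.card := card_le_card e2
    have hexp : (univ : Finset S).card - T.card
        = (A.card - (T ∩ A).card) + (Aᶜ.card - (T \ A).card) := by omega
    unfold pw
    rw [hexp, hcard, pow_add, pow_add]
    ring

/-- FKG inequality for two antitone nonneg functions against a log-supermodular weight -/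
lemma fkg_anti (ν f g : Finset S → ℝ) (hν0 : ∀ T, 0 ≤ ν T)
    (hν : ∀ a b : Finset S, ν a * ν b ≤ ν (a ∩ b) * ν (a ∪ b))
    (hf0 : ∀ T, 0 ≤ f T) (hg0 : ∀ T, 0 ≤ g T)
    (hf : ∀ a b : Finset S, a ⊆ b → f b ≤ f a) (hg : ∀ a b : Finset S, a ⊆ b → g b ≤ g a) :
    (∑ T : Finset S, ν T * f T) * (∑ T : Finset S, ν T * g T) ≤
      (∑ T : Finset S, ν T) * ∑ T : Finset S, ν T * (f T * g T) := by
  have h := four_functions_theorem_univ (fun T => ν T * f T) (fun T => ν T * g T)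
    (fun T => ν T * (f T * g T)) ν
    (fun T => mul_nonneg (hν0 T) (hf0 T)) (fun T => mul_nonneg (hν0 T) (hg0 T))
    (fun T => mul_nonneg (hν0 T) (mul_nonneg (hf0 T) (hg0 T))) hν0 ?_
  · simpa [mul_comm] using h
  intro a b
  have h1 : f a ≤ f (a ⊓ b) := hf _ _ inf_le_left
  have h2 : g b ≤ g (a ⊓ b) := hg _ _ inf_le_right
  calc ν a * f a * (ν b * g b) = (ν a * ν b) * (f a * g b) := by ring
    _ ≤ (ν (a ⊓ b) * ν (a ⊔ b)) * (f (a ⊓ b) * g (a ⊓ b)) := by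
        apply mul_le_mul (hν a b) ?_ (mul_nonneg (hf0 a) (hg0 b))
          (mul_nonneg (hν0 _) (hν0 _))
        exact mul_le_mul h1 h2 (hg0 b) (hf0 _)
    _ = ν (a ⊓ b) * (f (a ⊓ b) * g (a ⊓ b)) * ν (a ⊔ b) := by ring

/-- finite Jensen for `exp`: `exp (∑ w x) ≤ ∑ w exp x` for nonneg weights summing to 1 -/
lemma jensen_exp {ι : Type*} [Fintype ι] (w x : ι → ℝ) (hw0 : ∀ i, 0 ≤ w i)
    (hw1 : ∑ i, w i = 1) : Real.exp (∑ i, w i * x i) ≤ ∑ i, w i * Real.exp (x i) := by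
  have h := convexOn_exp.map_sum_le (t := (univ : Finset ι)) (w := w) (p := x)
    (fun i _ => hw0 i) hw1 (fun i _ => Set.mem_univ _)
  simpa [smul_eq_mul] using h

noncomputable def ind (A T : Finset S) : ℝ := if A ⊆ T then 1 else 0

lemma ind_nonneg (A T : Finset S) : 0 ≤ ind A T := by unfold ind; split_ifs <;> norm_num

lemma ind_le_one (A T : Finset S) : ind A T ≤ 1 := by unfold ind; split_ifs <;> norm_num

lemma ind_mono (A : Finset S) {a b : Finset S} (h : a ⊆ b) : ind A a ≤ ind A b := by
  unfold ind
  split_ifs with h1 h2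
  · exact le_refl _
  · exact absurd (h1.trans h) h2
  · norm_num
  · exact le_refl _

/-- The key correlation estimate:
`E[1_{E_i} e^{-sX}] ≥ P(E_i) e^{-s d_i/P_i} E[e^{-sX}]`. -/
lemma key (p : ℝ) (hp0 : 0 ≤ p) (hp1 : p ≤ 1) (m : ℕ) (A : Fin m → Finset S) (i : Fin m)
    (s : ℝ) (hs : 0 ≤ s) (Pi di : ℝ)
    (hPi : Pi = ∑ T : Finset S, pw p univ T * ind (A i) T) (hPipos : 0 < Pi)
    (hdi : di = ∑ j : Fin m, if (A i ∩ A j).Nonempty then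
      ∑ T : Finset S, pw p univ T * (ind (A i) T * ind (A j) T) else 0) :
    Pi * Real.exp (-(s * (di / Pi))) *
      (∑ T : Finset S, pw p univ T * Real.exp (-(s * (∑ j : Fin m, ind (A j) T)))) ≤
    ∑ T : Finset S, pw p univ T *
      (ind (A i) T * Real.exp (-(s * (∑ j : Fin m, ind (A j) T)))) := by
  set X : Finset S → ℝ := fun T => ∑ j : Fin m, ind (A j) T with hXdef
  set YR : Finset S → ℝ := fun T => ∑ j : Fin m,
    if (A i ∩ A j).Nonempty then ind (A j) T else 0 with hYdef
  set ZR : Finset S → ℝ := fun T => ∑ j : Fin m,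
    if (A i ∩ A j).Nonempty then 0 else ind (A j) T with hZdef
  have hX : ∀ T, X T = YR T + ZR T := by
    intro T
    rw [hYdef, hZdef, hXdef]
    dsimp only
    rw [← Finset.sum_add_distrib]
    refine Finset.sum_congr rfl fun j _ => ?_
    split_ifs <;> ring
  have hY0 : ∀ T, 0 ≤ YR T := fun T => Finset.sum_nonneg fun j _ => by
    split_ifs
    · exact ind_nonneg _ _
    · exact le_refl _
  have hYmono : ∀ a b : Finset S, a ⊆ b → YR a ≤ YR b := by
    intro a b hab
    refine Finset.sum_le_sum fun j _ => ?_
    split_ifs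
    · exact ind_mono _ hab
    · exact le_refl _
  have hZmono : ∀ a b : Finset S, a ⊆ b → ZR a ≤ ZR b := by
    intro a b hab
    refine Finset.sum_le_sum fun j _ => ?_
    split_ifs
    · exact le_refl _
    · exact ind_mono _ hab
  set ν : Finset S → ℝ := fun T => pw p univ T * ind (A i) T with hνdef
  set F : Finset S → ℝ := fun T => Real.exp (-(s * YR T)) with hFdef
  set G : Finset S → ℝ := fun T => Real.exp (-(s * ZR T)) with hGdef
  have hν0 : ∀ T, 0 ≤ ν T := fun T => mul_nonneg (pw_nonneg hp0 hp1 _ _) (ind_nonneg _ _)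
  have hFG : ∀ T, F T * G T = Real.exp (-(s * X T)) := by
    intro T
    rw [hFdef, hGdef]
    dsimp only
    rw [← Real.exp_add]
    congr 1
    rw [hX]
    ring
  have hFanti : ∀ a b : Finset S, a ⊆ b → F b ≤ F a := by
    intro a b hab
    apply Real.exp_le_exp.mpr
    have := hYmono a b hab
    nlinarith
  have hGanti : ∀ a b : Finset S, a ⊆ b → G b ≤ G a := by
    intro a b hab
    apply Real.exp_le_exp.mpr
    have := hZmono a b hab
    nlinarith
  have hind_supermod : ∀ a b : Finset S,
      ind (A i) a * ind (A i) b ≤ ind (A i) (a ∩ b) * ind (A i) (a ∪ b) := by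
    intro a b
    unfold ind
    by_cases h1 : A i ⊆ a <;> by_cases h2 : A i ⊆ b
    · rw [if_pos h1, if_pos h2, if_pos (Finset.subset_inter h1 h2),
        if_pos (h1.trans Finset.subset_union_left)]
    · rw [if_neg h2]
      have := mul_nonneg (ind_nonneg (A i) (a ∩ b)) (ind_nonneg (A i) (a ∪ b))
      unfold ind at this
      simpa using this
    · rw [if_neg h1]
      have := mul_nonneg (ind_nonneg (A i) (a ∩ b)) (ind_nonneg (A i) (a ∪ b))
      unfold ind at this
      simpa using this
    · rw [if_neg h1]
      have := mul_nonneg (ind_nonneg (A i) (a ∩ b)) (ind_nonneg (A i) (a ∪ b))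
      unfold ind at this
      simpa using this
  have hν_supermod : ∀ a b : Finset S, ν a * ν b ≤ ν (a ∩ b) * ν (a ∪ b) := by
    intro a b
    rw [hνdef]
    dsimp only
    calc pw p univ a * ind (A i) a * (pw p univ b * ind (A i) b)
        = (pw p univ a * pw p univ b) * (ind (A i) a * ind (A i) b) := by ring
      _ ≤ (pw p univ (a ∩ b) * pw p univ (a ∪ b)) * (ind (A i) (a ∩ b) * ind (A i) (a ∪ b)) := by
          rw [pw_mod]
          apply mul_le_mul_of_nonneg_left (hind_supermod a b)
          exact mul_nonneg (pw_nonneg hp0 hp1 _ _) (pw_nonneg hp0 hp1 _ _)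
      _ = _ := by ring
  -- Step 1 : FKG
  have step1 : (∑ T : Finset S, ν T * F T) * (∑ T : Finset S, ν T * G T) ≤
      Pi * ∑ T : Finset S, ν T * (F T * G T) := by
    have h := fkg_anti ν F G hν0 hν_supermod (fun T => (Real.exp_pos _).le)
      (fun T => (Real.exp_pos _).le) hFanti hGanti
    rwa [show (∑ T : Finset S, ν T) = Pi from hPi.symm] at h
  -- ∑ ν = Pi, ∑ ν YR = di
  have hνsum : ∑ T : Finset S, ν T = Pi := hPi.symm
  have hνY : ∑ T : Finset S, ν T * YR T = di := by
    rw [hdi]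
    rw [Finset.sum_congr rfl (fun T (_ : T ∈ (univ : Finset (Finset S))) => show ν T * YR T = ∑ j : Fin m,
        (if (A i ∩ A j).Nonempty then pw p univ T * (ind (A i) T * ind (A j) T) else 0) by
        rw [hνdef, hYdef]
        dsimp only
        rw [Finset.mul_sum]
        refine Finset.sum_congr rfl fun j _ => ?_
        split_ifs <;> ring)]
    rw [Finset.sum_comm]
    refine Finset.sum_congr rfl fun j _ => ?_
    split_ifs
    · rfl
    · exact Finset.sum_const_zero
  -- Step 4 : Jensen
  have step4 : Pi * Real.exp (-(s * (di / Pi))) ≤ ∑ T : Finset S, ν T * F T := by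
    have hw0 : ∀ T : Finset S, 0 ≤ ν T / Pi := fun T => div_nonneg (hν0 T) hPipos.le
    have hw1 : ∑ T : Finset S, ν T / Pi = 1 := by
      rw [← Finset.sum_div, hνsum, div_self hPipos.ne']
    have hj := jensen_exp (fun T : Finset S => ν T / Pi) (fun T => -(s * YR T)) hw0 hw1
    have hmean : ∑ T : Finset S, (ν T / Pi) * (-(s * YR T)) = -(s * (di / Pi)) := by
      calc ∑ T : Finset S, (ν T / Pi) * (-(s * YR T))
          = ∑ T : Finset S, (-s / Pi) * (ν T * YR T) := by
            refine Finset.sum_congr rfl fun T _ => ?_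
            ring
        _ = (-s / Pi) * di := by rw [← Finset.mul_sum, hνY]
        _ = -(s * (di / Pi)) := by ring
    rw [hmean] at hj
    have : Real.exp (-(s * (di / Pi))) ≤ (∑ T : Finset S, ν T * F T) / Pi := by
      refine hj.trans_eq ?_
      rw [Finset.sum_div]
      refine Finset.sum_congr rfl fun T _ => ?_
      rw [hFdef]
      ring
    calc Pi * Real.exp (-(s * (di / Pi))) ≤ Pi * ((∑ T : Finset S, ν T * F T) / Pi) := by
          exact mul_le_mul_of_nonneg_left this hPipos.le
      _ = ∑ T : Finset S, ν T * F T := by field_simp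
  -- Step 2 : independence
  have hindT : ∀ T : Finset S, ind (A i) T = ind (A i) (T ∩ A i) := by
    intro T
    unfold ind
    congr 1
    simp [Finset.subset_inter_iff]
  have hZT : ∀ T : Finset S, ZR T = ZR (T \ A i) := by
    intro T
    rw [hZdef]
    dsimp only
    refine Finset.sum_congr rfl fun j _ => ?_
    split_ifs with h
    · rfl
    · rw [Finset.not_nonempty_iff_eq_empty] at h
      unfold ind
      have hiff : A j ⊆ T ↔ A j ⊆ T \ A i := by
        constructor
        · intro hsub x hx
          refine Finset.mem_sdiff.mpr ⟨hsub hx, fun hxa => ?_⟩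
          have hmem : x ∈ A i ∩ A j := Finset.mem_inter.mpr ⟨hxa, hx⟩
          rw [h] at hmem
          exact absurd hmem (Finset.notMem_empty x)
        · intro hsub x hx
          exact (Finset.mem_sdiff.mp (hsub hx)).1
      rw [if_congr hiff rfl rfl]
  have hGT : ∀ T : Finset S, G T = G (T \ A i) := by
    intro T
    rw [hGdef]
    dsimp only
    rw [← hZT]
  have e1 : ∑ T : Finset S, ν T * G T =
      (∑ U ∈ (A i).powerset, pw p (A i) U * ind (A i) U) *
      (∑ V ∈ (A i)ᶜ.powerset, pw p (A i)ᶜ V * G V) := by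
    rw [← factor p (A i) (ind (A i)) G]
    refine Finset.sum_congr rfl fun T _ => ?_
    rw [hνdef]
    dsimp only
    rw [← hindT, ← hGT]
    ring
  have e2 : Pi = ∑ U ∈ (A i).powerset, pw p (A i) U * ind (A i) U := by
    have := factor p (A i) (ind (A i)) (fun _ => (1:ℝ))
    rw [hPi]
    calc ∑ T : Finset S, pw p univ T * ind (A i) T
        = ∑ T : Finset S, pw p univ T * (ind (A i) (T ∩ A i) * (fun _ : Finset S => (1:ℝ)) (T \ A i)) := by
          refine Finset.sum_congr rfl fun T _ => ?_
          rw [← hindT]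
          norm_num
      _ = (∑ U ∈ (A i).powerset, pw p (A i) U * ind (A i) U) *
          (∑ V ∈ (A i)ᶜ.powerset, pw p (A i)ᶜ V * 1) := by rw [this]
      _ = _ := by
          rw [show ∑ V ∈ (A i)ᶜ.powerset, pw p (A i)ᶜ V * 1
              = ∑ V ∈ (A i)ᶜ.powerset, pw p (A i)ᶜ V from
            Finset.sum_congr rfl fun V _ => mul_one _, mass, mul_one]
  have e3 : ∑ T : Finset S, pw p univ T * G T =
      ∑ V ∈ (A i)ᶜ.powerset, pw p (A i)ᶜ V * G V := by
    have := factor p (A i) (fun _ => (1:ℝ)) G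
    calc ∑ T : Finset S, pw p univ T * G T
        = ∑ T : Finset S, pw p univ T * ((fun _ : Finset S => (1:ℝ)) (T ∩ A i) * G (T \ A i)) := by
          refine Finset.sum_congr rfl fun T _ => ?_
          rw [← hGT]
          norm_num
      _ = (∑ U ∈ (A i).powerset, pw p (A i) U * 1) *
          (∑ V ∈ (A i)ᶜ.powerset, pw p (A i)ᶜ V * G V) := by rw [this]
      _ = _ := by
          rw [show ∑ U ∈ (A i).powerset, pw p (A i) U * 1
              = ∑ U ∈ (A i).powerset, pw p (A i) U from
            Finset.sum_congr rfl fun U _ => mul_one _, mass, one_mul]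
  have step2 : ∑ T : Finset S, ν T * G T = Pi * ∑ T : Finset S, pw p univ T * G T := by
    rw [e1, e3, ← e2]
  -- Step 3
  have step3 : ∑ T : Finset S, pw p univ T * Real.exp (-(s * X T)) ≤
      ∑ T : Finset S, pw p univ T * G T := by
    refine Finset.sum_le_sum fun T _ => ?_
    apply mul_le_mul_of_nonneg_left ?_ (pw_nonneg hp0 hp1 _ _)
    rw [hGdef]
    dsimp only
    apply Real.exp_le_exp.mpr
    have h1 : ZR T ≤ X T := by
      rw [hX]
      have := hY0 T
      linarith
    nlinarith
  -- Combine
  have hZs0 : 0 ≤ ∑ T : Finset S, pw p univ T * Real.exp (-(s * X T)) :=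
    Finset.sum_nonneg fun T _ => mul_nonneg (pw_nonneg hp0 hp1 _ _) (Real.exp_pos _).le
  have hchain : Pi * (Pi * Real.exp (-(s * (di / Pi))) *
      (∑ T : Finset S, pw p univ T * Real.exp (-(s * X T)))) ≤
      Pi * ∑ T : Finset S, ν T * (F T * G T) := by
    calc Pi * (Pi * Real.exp (-(s * (di / Pi))) *
        (∑ T : Finset S, pw p univ T * Real.exp (-(s * X T))))
        = (Pi * Real.exp (-(s * (di / Pi)))) *
          (Pi * (∑ T : Finset S, pw p univ T * Real.exp (-(s * X T)))) := by ring
      _ ≤ (∑ T : Finset S, ν T * F T) * (∑ T : Finset S, ν T * G T) := by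
          apply mul_le_mul step4 ?_ (mul_nonneg hPipos.le hZs0)
            (Finset.sum_nonneg fun T _ => mul_nonneg (hν0 T) (Real.exp_pos _).le)
          rw [step2]
          exact mul_le_mul_of_nonneg_left step3 hPipos.le
      _ ≤ Pi * ∑ T : Finset S, ν T * (F T * G T) := step1
  have hfin := le_of_mul_le_mul_left hchain hPipos
  calc Pi * Real.exp (-(s * (di / Pi))) *
      (∑ T : Finset S, pw p univ T * Real.exp (-(s * (∑ j : Fin m, ind (A j) T))))
      ≤ ∑ T : Finset S, ν T * (F T * G T) := hfin
    _ = ∑ T : Finset S, pw p univ T *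
        (ind (A i) T * Real.exp (-(s * (∑ j : Fin m, ind (A j) T)))) := by
        refine Finset.sum_congr rfl fun T _ => ?_
        rw [hFG, hνdef]
        dsimp only
        ring

end Janson13


/-- Janson's inequality (simplest form): for subsets `A₁, …, A_m` of a finite set `S` and
the `p`-random subset `S_p`, with `E_i = {A_i ⊆ S_p}`, `μ = Σ P(E_i)` and
`Δ̄ = ΣΣ {P(E_i ∩ E_j) : A_i ∩ A_j ≠ ∅}` (including the diagonal),
`P(no E_i occurs) ≤ exp(-μ²/Δ̄)`. -/
theorem stmt13 {S : Type*} [Fintype S] [DecidableEq S]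
    (p : ℝ) (hp0 : 0 ≤ p) (hp1 : p ≤ 1) (m : ℕ) (A : Fin m → Finset S)
    -- probability of an event for the `p`-random subset of `S`
    (Pr : (Finset S → Prop) → ℝ)
    (hPr : ∀ E : Finset S → Prop, Pr E =
      ∑ T : Finset S, (if E T then p ^ T.card * (1 - p) ^ (Fintype.card S - T.card) else 0))
    (μ Δbar : ℝ)
    (hμ : μ = ∑ i : Fin m, Pr (fun T => A i ⊆ T))
    (hΔ : Δbar = ∑ i : Fin m, ∑ j : Fin m,
      (if (A i ∩ A j).Nonempty then Pr (fun T => A i ⊆ T ∧ A j ⊆ T) else 0)) :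
    Pr (fun T => ∀ i : Fin m, ¬ A i ⊆ T) ≤ Real.exp (-(μ ^ 2 / Δbar)) := by
  classical
  have hjw : ∀ T : Finset S, p ^ T.card * (1 - p) ^ (Fintype.card S - T.card)
      = Janson13.pw p Finset.univ T := by
    intro T
    rw [Janson13.pw, Finset.card_univ]
  have hsum1 : ∑ T : Finset S, Janson13.pw p Finset.univ T = 1 := by
    have h := Janson13.mass p (Finset.univ : Finset S)
    rwa [Finset.powerset_univ] at h
  -- trivial case : some `A i` is empty, so some event always occurs
  by_cases hAe : ∃ i, A i = ∅
  · obtain ⟨i, hi⟩ := hAe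
    have hz : Pr (fun T => ∀ i : Fin m, ¬ A i ⊆ T) = 0 := by
      rw [hPr]
      refine Finset.sum_eq_zero fun T _ => ?_
      rw [if_neg]
      intro h
      exact h i (hi ▸ Finset.empty_subset T)
    rw [hz]
    exact (Real.exp_pos _).le
  push_neg at hAe
  -- the individual and pairwise probabilities
  set P : Fin m → ℝ := fun i => ∑ T : Finset S,
    Janson13.pw p Finset.univ T * Janson13.ind (A i) T with hPdef
  set PP : Fin m → Fin m → ℝ := fun i j => ∑ T : Finset S,
    Janson13.pw p Finset.univ T * (Janson13.ind (A i) T * Janson13.ind (A j) T) with hPPdef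
  set d : Fin m → ℝ := fun i => ∑ j : Fin m,
    if (A i ∩ A j).Nonempty then PP i j else 0 with hddef
  have hμP : μ = ∑ i, P i := by
    rw [hμ]
    refine Finset.sum_congr rfl fun i _ => ?_
    rw [hPr, hPdef]
    refine Finset.sum_congr rfl fun T _ => ?_
    unfold Janson13.ind
    split_ifs with h
    · rw [mul_one, hjw]
    · rw [mul_zero]
  have hΔd : Δbar = ∑ i, d i := by
    rw [hΔ]
    refine Finset.sum_congr rfl fun i _ => ?_
    rw [hddef]
    refine Finset.sum_congr rfl fun j _ => ?_
    split_ifs with h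
    · rw [hPr, hPPdef]
      refine Finset.sum_congr rfl fun T _ => ?_
      unfold Janson13.ind
      by_cases h1 : A i ⊆ T <;> by_cases h2 : A j ⊆ T <;>
        simp [h1, h2, hjw T]
    · rfl
  have hP0 : ∀ i, 0 ≤ P i := fun i => Finset.sum_nonneg fun T _ =>
    mul_nonneg (Janson13.pw_nonneg hp0 hp1 _ _) (Janson13.ind_nonneg _ _)
  have hPP0 : ∀ i j, 0 ≤ PP i j := fun i j => Finset.sum_nonneg fun T _ =>
    mul_nonneg (Janson13.pw_nonneg hp0 hp1 _ _)
      (mul_nonneg (Janson13.ind_nonneg _ _) (Janson13.ind_nonneg _ _))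
  have hLHS1 : Pr (fun T => ∀ i : Fin m, ¬ A i ⊆ T) ≤ 1 := by
    rw [hPr]
    refine le_trans ?_ (le_of_eq hsum1)
    apply Finset.sum_le_sum
    intro T _
    split_ifs with h
    · rw [hjw]
    · exact Janson13.pw_nonneg hp0 hp1 _ _
  by_cases hμ0 : μ = 0
  · rw [hμ0]
    norm_num
    exact hLHS1
  have hμpos : 0 < μ := lt_of_le_of_ne (hμP ▸ Finset.sum_nonneg fun i _ => hP0 i) (Ne.symm hμ0)
  have hppos : 0 < p := by
    rcases lt_or_eq_of_le hp0 with h | h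
    · exact h
    · exfalso
      apply hμ0
      rw [hμP]
      refine Finset.sum_eq_zero fun i _ => ?_
      rw [hPdef]
      refine Finset.sum_eq_zero fun T _ => ?_
      unfold Janson13.ind
      split_ifs with hT
      · obtain ⟨x, hx⟩ := hAe i
        have hTne : T.Nonempty := ⟨x, hT hx⟩
        have : T.card ≠ 0 := Finset.card_ne_zero.mpr hTne
        rw [Janson13.pw, ← h]
        rw [zero_pow this, zero_mul, zero_mul]
      · rw [mul_zero]
  have hPpos : ∀ i, 0 < P i := by
    intro i
    have h1 : Janson13.pw p Finset.univ (Finset.univ : Finset S) *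
        Janson13.ind (A i) (Finset.univ : Finset S) ≤ P i := by
      show _ ≤ ∑ T : Finset S, Janson13.pw p Finset.univ T * Janson13.ind (A i) T
      exact Finset.single_le_sum
        (f := fun T : Finset S => Janson13.pw p Finset.univ T * Janson13.ind (A i) T)
        (fun T _ => mul_nonneg (Janson13.pw_nonneg hp0 hp1 _ _)
          (Janson13.ind_nonneg _ _)) (Finset.mem_univ (Finset.univ : Finset S))
    have h2 : Janson13.ind (A i) (Finset.univ : Finset S) = 1 := by
      unfold Janson13.ind
      rw [if_pos (Finset.subset_univ _)]
    have h3 : (0:ℝ) < Janson13.pw p Finset.univ (Finset.univ : Finset S) := by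
      rw [Janson13.pw, Nat.sub_self, pow_zero, mul_one]
      positivity
    rw [h2, mul_one] at h1
    linarith
  have hPd : ∀ i, P i ≤ d i := by
    intro i
    have hdiag : PP i i = P i := by
      rw [hPPdef, hPdef]
      refine Finset.sum_congr rfl fun T _ => ?_
      unfold Janson13.ind
      split_ifs <;> ring
    have h1 : (if (A i ∩ A i).Nonempty then PP i i else 0) ≤
        ∑ j : Fin m, if (A i ∩ A j).Nonempty then PP i j else 0 :=
      Finset.single_le_sum (f := fun j => if (A i ∩ A j).Nonempty then PP i j else 0)
        (fun j _ => by
          split_ifs with hc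
          · exact hPP0 i j
          · exact le_refl _) (Finset.mem_univ i)
    rw [Finset.inter_self, if_pos (hAe i), hdiag] at h1
    exact h1.trans_eq (by rw [hddef])
  have hdpos : ∀ i, 0 < d i := fun i => lt_of_lt_of_le (hPpos i) (hPd i)
  have hΔpos : 0 < Δbar := by
    rw [hΔd]
    calc (0:ℝ) < μ := hμpos
      _ = ∑ i, P i := hμP
      _ ≤ ∑ i, d i := Finset.sum_le_sum fun i _ => hPd i
  -- the Laplace transform `Z` and its derivative
  set X : Finset S → ℝ := fun T => ∑ j : Fin m, Janson13.ind (A j) T with hXdef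
  set Z : ℝ → ℝ := fun s => ∑ T : Finset S,
    Janson13.pw p Finset.univ T * Real.exp (-(s * X T)) with hZdef
  set Z' : ℝ → ℝ := fun s => ∑ T : Finset S,
    Janson13.pw p Finset.univ T * (Real.exp (-(s * X T)) * (-(X T))) with hZ'def
  have hZd : ∀ s, HasDerivAt Z (Z' s) s := by
    intro s
    rw [hZdef, hZ'def]
    refine HasDerivAt.fun_sum fun T _ => ?_
    have h1 : HasDerivAt (fun u : ℝ => -(u * X T)) (-(X T)) s := by
      simpa using ((hasDerivAt_id s).mul_const (X T)).fun_neg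
    exact h1.exp.const_mul _
  have hZpos : ∀ s, 0 < Z s := by
    intro s
    have h1 : Janson13.pw p Finset.univ (Finset.univ : Finset S) *
        Real.exp (-(s * X (Finset.univ : Finset S))) ≤ Z s := by
      show _ ≤ ∑ T : Finset S, Janson13.pw p Finset.univ T * Real.exp (-(s * X T))
      exact Finset.single_le_sum
        (f := fun T : Finset S => Janson13.pw p Finset.univ T * Real.exp (-(s * X T)))
        (fun T _ => mul_nonneg (Janson13.pw_nonneg hp0 hp1 _ _)
          (Real.exp_pos _).le) (Finset.mem_univ (Finset.univ : Finset S))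
    have h3 : (0:ℝ) < Janson13.pw p Finset.univ (Finset.univ : Finset S) := by
      rw [Janson13.pw, Nat.sub_self, pow_zero, mul_one]
      positivity
    have := mul_pos h3 (Real.exp_pos (-(s * X Finset.univ)))
    linarith
  have hZ0 : Z 0 = 1 := by
    rw [hZdef]
    simp only [zero_mul, neg_zero, Real.exp_zero, mul_one]
    exact hsum1
  set c : Fin m → ℝ := fun i => d i / P i with hcdef
  have hcpos : ∀ i, 0 < c i := fun i => div_pos (hdpos i) (hPpos i)
  set W : ℝ → ℝ := fun s => ∑ i, P i * Real.exp (-(s * c i)) with hWdef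
  have hkey : ∀ s, 0 ≤ s → Z' s ≤ -(W s * Z s) := by
    intro s hs
    have h1 : ∀ i : Fin m, P i * Real.exp (-(s * c i)) * Z s ≤
        ∑ T : Finset S, Janson13.pw p Finset.univ T *
          (Janson13.ind (A i) T * Real.exp (-(s * X T))) := by
      intro i
      exact Janson13.key p hp0 hp1 m A i s hs (P i) (d i) (by rw [hPdef]) (hPpos i)
        (by rw [hddef, hPPdef])
    have e : ∀ T : Finset S, Janson13.pw p Finset.univ T * (Real.exp (-(s * X T)) * (-(X T)))
        = -(∑ i : Fin m, Janson13.pw p Finset.univ T *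
            (Janson13.ind (A i) T * Real.exp (-(s * X T)))) := by
      intro T
      have e2 : (∑ i : Fin m, Janson13.pw p Finset.univ T *
          (Janson13.ind (A i) T * Real.exp (-(s * X T))))
          = Janson13.pw p Finset.univ T * (X T * Real.exp (-(s * X T))) := by
        rw [← Finset.mul_sum]
        congr 1
        rw [hXdef]
        dsimp only
        rw [Finset.sum_mul]
      rw [e2]
      ring
    have h2 : Z' s = -(∑ i : Fin m, ∑ T : Finset S, Janson13.pw p Finset.univ T *
        (Janson13.ind (A i) T * Real.exp (-(s * X T)))) := by
      rw [hZ'def]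
      dsimp only
      rw [Finset.sum_congr rfl (fun T (_ : T ∈ Finset.univ) => e T), Finset.sum_neg_distrib,
        Finset.sum_comm]
    rw [h2]
    have h3 : W s * Z s ≤ ∑ i : Fin m, ∑ T : Finset S, Janson13.pw p Finset.univ T *
        (Janson13.ind (A i) T * Real.exp (-(s * X T))) := by
      rw [hWdef, Finset.sum_mul]
      exact Finset.sum_le_sum fun i _ => h1 i
    linarith
  set Φ : ℝ → ℝ := fun s => ∑ i, (P i ^ 2 / d i) * (1 - Real.exp (-(s * c i))) with hΦdef
  set g : ℝ → ℝ := fun s => Real.log (Z s) + Φ s with hgdef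
  have hgd : ∀ s, HasDerivAt g (Z' s / Z s + W s) s := by
    intro s
    have h1 : HasDerivAt (fun u => Real.log (Z u)) (Z' s / Z s) s := (hZd s).log (hZpos s).ne'
    have h2 : HasDerivAt Φ (W s) s := by
      rw [hΦdef, hWdef]
      refine HasDerivAt.fun_sum fun i _ => ?_
      have h4 : HasDerivAt (fun u : ℝ => -(u * c i)) (-(c i)) s := by
        simpa using ((hasDerivAt_id s).mul_const (c i)).fun_neg
      have h6 := (h4.exp.const_sub 1).const_mul (P i ^ 2 / d i)
      refine h6.congr_deriv ?_
      rw [hcdef]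
      have hd' : d i ≠ 0 := (hdpos i).ne'
      have hP' : P i ≠ 0 := (hPpos i).ne'
      field_simp
    exact h1.add h2
  have hganti : AntitoneOn g (Set.Ici (0:ℝ)) := by
    apply antitoneOn_of_deriv_nonpos (convex_Ici 0)
    · exact fun s _ => (hgd s).continuousAt.continuousWithinAt
    · exact fun s _ => (hgd s).differentiableAt.differentiableWithinAt
    · intro s hs
      rw [interior_Ici] at hs
      rw [(hgd s).deriv]
      have h1 := hkey s (le_of_lt hs)
      have hz := hZpos s
      have h2 : Z' s / Z s ≤ -(W s) := by
        rw [div_le_iff₀ hz]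
        linarith
      linarith
  have hg0 : g 0 = 0 := by
    rw [hgdef]
    simp only [hZ0, Real.log_one, hΦdef]
    simp
  have hZle : ∀ s, 0 ≤ s → Z s ≤ Real.exp (-(Φ s)) := by
    intro s hs
    have h1 : g s ≤ g 0 := hganti Set.self_mem_Ici hs hs
    rw [hg0, hgdef] at h1
    simp only at h1
    have h2 : Real.log (Z s) ≤ -(Φ s) := by linarith
    calc Z s = Real.exp (Real.log (Z s)) := (Real.exp_log (hZpos s)).symm
      _ ≤ Real.exp (-(Φ s)) := Real.exp_le_exp.mpr h2
  have hLHSZ : ∀ s, 0 ≤ s → Pr (fun T => ∀ i : Fin m, ¬ A i ⊆ T) ≤ Z s := by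
    intro s hs
    rw [hPr, hZdef]
    refine Finset.sum_le_sum fun T _ => ?_
    split_ifs with h
    · have hX0 : X T = 0 := by
        rw [hXdef]
        exact Finset.sum_eq_zero fun j _ => by
          unfold Janson13.ind
          rw [if_neg (h j)]
      rw [hjw T, hX0, mul_zero, neg_zero, Real.exp_zero, mul_one]
    · exact mul_nonneg (Janson13.pw_nonneg hp0 hp1 _ _) (Real.exp_pos _).le
  set L : ℝ := ∑ i, P i ^ 2 / d i with hLdef
  have htend : Filter.Tendsto (fun s => Real.exp (-(Φ s))) Filter.atTop (nhds (Real.exp (-L))) := by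
    have h1 : Filter.Tendsto Φ Filter.atTop (nhds L) := by
      rw [hΦdef, hLdef]
      have h2 : ∀ i : Fin m, Filter.Tendsto
          (fun s => (P i ^ 2 / d i) * (1 - Real.exp (-(s * c i)))) Filter.atTop
          (nhds ((P i ^ 2 / d i) * (1 - 0))) := by
        intro i
        refine Filter.Tendsto.const_mul _ (Filter.Tendsto.const_sub _ ?_)
        have h3 : Filter.Tendsto (fun s : ℝ => s * c i) Filter.atTop Filter.atTop :=
          Filter.Tendsto.atTop_mul_const (hcpos i) Filter.tendsto_id
        have h4 : Filter.Tendsto (fun s : ℝ => -(s * c i)) Filter.atTop Filter.atBot :=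
          Filter.tendsto_neg_atTop_atBot.comp h3
        exact Real.tendsto_exp_atBot.comp h4
      have h5 := tendsto_finset_sum Finset.univ (fun i _ => h2 i)
      simpa using h5
    exact (Real.continuous_exp.continuousAt.tendsto).comp h1.neg
  have hfin1 : Pr (fun T => ∀ i : Fin m, ¬ A i ⊆ T) ≤ Real.exp (-L) := by
    apply ge_of_tendsto htend
    filter_upwards [Filter.eventually_ge_atTop (0:ℝ)] with s hs
    exact (hLHSZ s hs).trans (hZle s hs)
  have hCS : μ ^ 2 / Δbar ≤ L := by
    rw [hμP, hΔd, hLdef]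
    exact Finset.sq_sum_div_le_sum_sq_div Finset.univ P (fun i _ => hdpos i)
  refine hfin1.trans ?_
  apply Real.exp_le_exp.mpr
  linarith
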